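/- Fix s>0, N∈ℕ, ρ>0, and let μ(η)=∏_{i=1}^{N} ν_ρ(η_i) be the homogeneous product of Negative Binomial laws on ℕ^N. Then the generator ℒ of the open harmonic process with equal reservoir densities ρ_l=ρ_r=ρ is reversible with respect to μ: for all functions f,g:ℕ^N→ℝ with finite support, Σ_{η∈ℕ^N} μ(η) f(η)(ℒg)(η) = Σ_{η∈ℕ^N} μ(η)(ℒf)(η) g(η) (all sums involved converge absolutely). -/

import Mathlib

/-- The jump rate of the harmonic model with parameter `s`:
`φ_s(k,n) = (1/k)·Γ(n+1)Γ(n−k+2s)/(Γ(n−k+1)Γ(n+2s))` for `1 ≤ k ≤ n`, and `0` otherwise. -/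
noncomputable def phiRate (s : ℝ) (k n : ℕ) : ℝ :=
  if 1 ≤ k ∧ k ≤ n then
    (1 / (k : ℝ)) * (Real.Gamma ((n : ℝ) + 1) * Real.Gamma ((n : ℝ) - (k : ℝ) + 2 * s)) /
      (Real.Gamma ((n : ℝ) - (k : ℝ) + 1) * Real.Gamma ((n : ℝ) + 2 * s))
  else 0

/-- The configuration `η + kδ^i`. -/
def addAt {M : ℕ} (η : Fin M → ℕ) (i : Fin M) (k : ℕ) : Fin M → ℕ :=
  Function.update η i (η i + k)

/-- The configuration `η − kδ^i`. -/
def subAt {M : ℕ} (η : Fin M → ℕ) (i : Fin M) (k : ℕ) : Fin M → ℕ :=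
  Function.update η i (η i - k)

/-- The configuration `η − kδ^i + kδ^j`. -/
def moveK {M : ℕ} (η : Fin M → ℕ) (i j : Fin M) (k : ℕ) : Fin M → ℕ :=
  addAt (subAt η i k) j k

/-- The bulk part of the generator acting on the bond `(i,j)`:
`(ℒ_{i,j}f)(η) = Σ_{k=1}^{η_i} φ_s(k,η_i)[f(η−kδ^i+kδ^j)−f(η)]
+ Σ_{k=1}^{η_j} φ_s(k,η_j)[f(η+kδ^i−kδ^j)−f(η)]`. -/
noncomputable def genBulk (s : ℝ) {M : ℕ} (i j : Fin M) (f : (Fin M → ℕ) → ℝ)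
    (η : Fin M → ℕ) : ℝ :=
  (∑ k ∈ Finset.Icc 1 (η i), phiRate s k (η i) * (f (moveK η i j k) - f η))
    + ∑ k ∈ Finset.Icc 1 (η j), phiRate s k (η j) * (f (moveK η j i k) - f η)

/-- The boundary part of the generator acting at site `i`, with reservoir density `ρ`:
`(ℒ_i f)(η) = Σ_{k=1}^{η_i} φ_s(k,η_i)[f(η−kδ^i)−f(η)]
+ Σ_{k=1}^{∞}(1/k)(ρ/(1+ρ))^k[f(η+kδ^i)−f(η)]`. -/
noncomputable def genBdry (s ρ : ℝ) {M : ℕ} (i : Fin M) (f : (Fin M → ℕ) → ℝ)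
    (η : Fin M → ℕ) : ℝ :=
  (∑ k ∈ Finset.Icc 1 (η i), phiRate s k (η i) * (f (subAt η i k) - f η))
    + ∑' k : ℕ, (if k = 0 then 0
        else (1 / (k : ℝ)) * (ρ / (1 + ρ)) ^ k * (f (addAt η i k) - f η))

/-- The generator of the open harmonic process with parameter `s` and reservoir densities
`ρ_l`, `ρ_r`, on `N+1` sites (so the system size is at least 1):
`ℒf = ℒ_1 f + Σ_{i=1}^{N} ℒ_{i,i+1}f + ℒ_{N+1} f`. -/
noncomputable def harmonicGenerator (s ρl ρr : ℝ) {N : ℕ} (f : (Fin (N + 1) → ℕ) → ℝ)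
    (η : Fin (N + 1) → ℕ) : ℝ :=
  genBdry s ρl 0 f η
    + (∑ i : Fin N, genBulk s i.castSucc i.succ f η)
    + genBdry s ρr (Fin.last N) f η

/-- The Negative Binomial probability mass function with shape parameter `2s` and scale `θ`:
`ν_θ(m) = (Γ(2s+m)/(m!·Γ(2s)))·(θ/(1+θ))^m·(1+θ)^{−2s}`. -/
noncomputable def negBin (s θ : ℝ) (m : ℕ) : ℝ :=
  (Real.Gamma (2 * s + (m : ℝ)) / ((m.factorial : ℝ) * Real.Gamma (2 * s)))
    * (θ / (1 + θ)) ^ m * (1 + θ) ^ (-(2 * s))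

section Aux

variable {M : ℕ}

lemma hm_subAt_self (η : Fin M → ℕ) (i : Fin M) (k : ℕ) : subAt η i k i = η i - k := by
  simp [subAt]
lemma hm_subAt_ne (η : Fin M → ℕ) {i l : Fin M} (k : ℕ) (h : l ≠ i) : subAt η i k l = η l := by
  simp [subAt, Function.update_of_ne h]
lemma hm_addAt_self (η : Fin M → ℕ) (i : Fin M) (k : ℕ) : addAt η i k i = η i + k := by
  simp [addAt]
lemma hm_addAt_ne (η : Fin M → ℕ) {i l : Fin M} (k : ℕ) (h : l ≠ i) : addAt η i k l = η l := by
  simp [addAt, Function.update_of_ne h]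

lemma hm_addAt_subAt (η : Fin M → ℕ) (i : Fin M) {k : ℕ} (h : k ≤ η i) :
    addAt (subAt η i k) i k = η := by
  funext l
  rcases eq_or_ne l i with rfl | hl
  · rw [hm_addAt_self, hm_subAt_self, Nat.sub_add_cancel h]
  · rw [hm_addAt_ne _ _ hl, hm_subAt_ne _ _ hl]

lemma hm_subAt_addAt (η : Fin M → ℕ) (i : Fin M) (k : ℕ) :
    subAt (addAt η i k) i k = η := by
  funext l
  rcases eq_or_ne l i with rfl | hl
  · rw [hm_subAt_self, hm_addAt_self, Nat.add_sub_cancel]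
  · rw [hm_subAt_ne _ _ hl, hm_addAt_ne _ _ hl]

lemma hm_moveK_apply_i (η : Fin M → ℕ) {i j : Fin M} (hij : i ≠ j) (k : ℕ) :
    moveK η i j k i = η i - k := by
  rw [moveK, hm_addAt_ne _ _ hij, hm_subAt_self]
lemma hm_moveK_apply_j (η : Fin M → ℕ) {i j : Fin M} (hij : i ≠ j) (k : ℕ) :
    moveK η i j k j = η j + k := by
  rw [moveK, hm_addAt_self, hm_subAt_ne _ _ hij.symm]

lemma hm_subAt_moveK (η : Fin M → ℕ) {i j : Fin M} (hij : i ≠ j) (k : ℕ) :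
    subAt (moveK η i j k) j k = subAt η i k := by
  rw [moveK, hm_subAt_addAt]

lemma hm_moveK_moveK (η : Fin M → ℕ) {i j : Fin M} (hij : i ≠ j) {k : ℕ} (h : k ≤ η i) :
    moveK (moveK η i j k) j i k = η := by
  show addAt (subAt (moveK η i j k) j k) i k = η
  rw [hm_subAt_moveK η hij]
  exact hm_addAt_subAt η i h

lemma negBin_pos {s ρ : ℝ} (hs : 0 < s) (hρ : 0 < ρ) (m : ℕ) : 0 < negBin s ρ m := by
  have h1 : (0:ℝ) < 1 + ρ := by linarith
  have h2 : (0:ℝ) < 2 * s + m := by positivity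
  unfold negBin
  have := Real.Gamma_pos_of_pos h2
  have := Real.Gamma_pos_of_pos (by positivity : (0:ℝ) < 2 * s)
  have hfac : (0:ℝ) < (m.factorial : ℝ) := by positivity
  have hp : (0:ℝ) < ρ / (1 + ρ) := by positivity
  have hr : (0:ℝ) < (1 + ρ) ^ (-(2 * s)) := Real.rpow_pos_of_pos h1 _
  positivity

lemma phiRate_pos {s : ℝ} (hs : 0 < s) {k n : ℕ} (h1 : 1 ≤ k) (h2 : k ≤ n) :
    0 < phiRate s k n := by
  have hnk : ((n:ℝ) - k) = ((n - k : ℕ) : ℝ) := by rw [Nat.cast_sub h2]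
  unfold phiRate
  rw [if_pos ⟨h1, h2⟩, hnk]
  have g1 := Real.Gamma_pos_of_pos (by positivity : (0:ℝ) < (n:ℝ) + 1)
  have g2 := Real.Gamma_pos_of_pos (by positivity : (0:ℝ) < ((n - k : ℕ):ℝ) + 2 * s)
  have g3 := Real.Gamma_pos_of_pos (by positivity : (0:ℝ) < ((n - k : ℕ):ℝ) + 1)
  have g4 := Real.Gamma_pos_of_pos (by positivity : (0:ℝ) < (n:ℝ) + 2 * s)
  have hk : (0:ℝ) < (k:ℝ) := by exact_mod_cast h1
  positivity

lemma phiRate_zero {s : ℝ} {k n : ℕ} (h : ¬(1 ≤ k ∧ k ≤ n)) : phiRate s k n = 0 :=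
  if_neg h

lemma phiRate_ne_zero_imp {s : ℝ} {k n : ℕ} (h : phiRate s k n ≠ 0) : 1 ≤ k ∧ k ≤ n := by
  by_contra hc; exact h (phiRate_zero hc)

lemma balanceA {s ρ : ℝ} (hs : 0 < s) (hρ : 0 < ρ) {k n : ℕ} (h1 : 1 ≤ k) (h2 : k ≤ n) :
    negBin s ρ n * phiRate s k n
      = negBin s ρ (n - k) * ((1 / (k:ℝ)) * (ρ / (1 + ρ)) ^ k) := by
  have h1ρ : (0:ℝ) < 1 + ρ := by linarith
  have hnk : ((n:ℝ) - k) = ((n - k : ℕ) : ℝ) := by rw [Nat.cast_sub h2]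
  unfold negBin phiRate
  rw [if_pos ⟨h1, h2⟩, hnk, Real.Gamma_nat_eq_factorial, Real.Gamma_nat_eq_factorial (n - k)]
  have hpow : (ρ / (1 + ρ)) ^ n = (ρ / (1 + ρ)) ^ (n - k) * (ρ / (1 + ρ)) ^ k := by
    rw [← pow_add, Nat.sub_add_cancel h2]
  rw [hpow]
  have e1 : Real.Gamma (2 * s + (n:ℝ)) = Real.Gamma ((n:ℝ) + 2 * s) := by rw [add_comm]
  have e2 : Real.Gamma (2 * s + ((n - k : ℕ):ℝ)) = Real.Gamma (((n - k : ℕ):ℝ) + 2 * s) := by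
    rw [add_comm]
  rw [e1, e2]
  have hΓs : Real.Gamma (2 * s) ≠ 0 := (Real.Gamma_pos_of_pos (by positivity)).ne'
  have hΓn : Real.Gamma ((n:ℝ) + 2 * s) ≠ 0 := (Real.Gamma_pos_of_pos (by positivity)).ne'
  have hfn : ((n.factorial : ℕ):ℝ) ≠ 0 := by positivity
  have hfnk : (((n - k).factorial : ℕ):ℝ) ≠ 0 := by positivity
  have hk : ((k:ℕ):ℝ) ≠ 0 := by
    have : (0:ℝ) < (k:ℝ) := by exact_mod_cast h1
    exact this.ne'
  field_simp

noncomputable def muH (s ρ : ℝ) (η : Fin M → ℕ) : ℝ := ∏ i, negBin s ρ (η i)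

lemma muH_pos {s ρ : ℝ} (hs : 0 < s) (hρ : 0 < ρ) (η : Fin M → ℕ) : 0 < muH s ρ η :=
  Finset.prod_pos fun i _ => negBin_pos hs hρ _

lemma muH_update (s ρ : ℝ) (η : Fin M → ℕ) (i : Fin M) (m : ℕ) :
    muH s ρ (Function.update η i m)
      = negBin s ρ m * ∏ j ∈ Finset.univ.erase i, negBin s ρ (η j) := by
  unfold muH
  rw [← Finset.mul_prod_erase Finset.univ _ (Finset.mem_univ i), Function.update_self]
  congr 1
  exact Finset.prod_congr rfl fun j hj => by
    rw [Function.update_of_ne (Finset.ne_of_mem_erase hj)]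

lemma muH_self_eq (s ρ : ℝ) (η : Fin M → ℕ) (i : Fin M) :
    muH s ρ η = negBin s ρ (η i) * ∏ j ∈ Finset.univ.erase i, negBin s ρ (η j) := by
  conv_lhs => rw [show η = Function.update η i (η i) from (Function.update_eq_self i η).symm]
  rw [muH_update]

lemma muH_balance_sub {s ρ : ℝ} (hs : 0 < s) (hρ : 0 < ρ) (η : Fin M → ℕ) (i : Fin M)
    {k : ℕ} (h1 : 1 ≤ k) (h2 : k ≤ η i) :
    muH s ρ η * phiRate s k (η i)
      = muH s ρ (subAt η i k) * ((1 / (k:ℝ)) * (ρ / (1 + ρ)) ^ k) := by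
  have hA := balanceA (ρ := ρ) hs hρ h1 h2 (n := η i)
  rw [muH_self_eq s ρ η i, show subAt η i k = Function.update η i (η i - k) from rfl,
    muH_update]
  linear_combination (∏ j ∈ Finset.univ.erase i, negBin s ρ (η j)) * hA

lemma muH_balance_move {s ρ : ℝ} (hs : 0 < s) (hρ : 0 < ρ) (η : Fin M → ℕ) {i j : Fin M}
    (hij : i ≠ j) {k : ℕ} (h1 : 1 ≤ k) (h2 : k ≤ η i) :
    muH s ρ η * phiRate s k (η i)
      = muH s ρ (moveK η i j k) * phiRate s k (η j + k) := by
  have HA := muH_balance_sub hs hρ η i h1 h2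
  have HB := muH_balance_sub hs hρ (moveK η i j k) j h1
    (by rw [hm_moveK_apply_j η hij]; exact Nat.le_add_left _ _)
  rw [hm_moveK_apply_j η hij, hm_subAt_moveK η hij] at HB
  rw [HA, ← HB]

end Aux

section Cross

variable {M : ℕ}

lemma cross_bdry {s ρ : ℝ} (hs : 0 < s) (hρ : 0 < ρ) (S : Finset (Fin M → ℕ)) (K : ℕ)
    (i : Fin M) (u v : (Fin M → ℕ) → ℝ)
    (hu : ∀ ζ, u ζ ≠ 0 → ζ ∈ S) (hv : ∀ ζ, v ζ ≠ 0 → ζ ∈ S) :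
    ∑ η ∈ S, ∑ k ∈ Finset.Icc 1 K,
        muH s ρ η * phiRate s k (η i) * u η * v (subAt η i k)
      = ∑ η ∈ S, ∑ k ∈ Finset.Icc 1 K,
          muH s ρ η * ((1 / (k:ℝ)) * (ρ / (1 + ρ)) ^ k) * u (addAt η i k) * v η := by
  rw [← Finset.sum_product' S (Finset.Icc 1 K)
      (fun η k => muH s ρ η * phiRate s k (η i) * u η * v (subAt η i k)),
    ← Finset.sum_product' S (Finset.Icc 1 K)
      (fun η k => muH s ρ η * ((1 / (k:ℝ)) * (ρ / (1 + ρ)) ^ k) * u (addAt η i k) * v η)]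
  refine Finset.sum_bij_ne_zero (fun a _ _ => (subAt a.1 i a.2, a.2)) ?_ ?_ ?_ ?_
  · intro a h₁ h₂
    have hva : v (subAt a.1 i a.2) ≠ 0 := fun h => h₂ (by rw [h, mul_zero])
    exact Finset.mem_product.mpr ⟨hv _ hva, (Finset.mem_product.mp h₁).2⟩
  · intro a₁ h₁₁ h₁₂ a₂ h₂₁ h₂₂ heq
    have hφ₁ := phiRate_ne_zero_imp (fun h : phiRate s a₁.2 (a₁.1 i) = 0 => h₁₂ (by simp [h]))
    have hφ₂ := phiRate_ne_zero_imp (fun h : phiRate s a₂.2 (a₂.1 i) = 0 => h₂₂ (by simp [h]))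
    have heq' : (subAt a₁.1 i a₁.2, a₁.2) = (subAt a₂.1 i a₂.2, a₂.2) := heq
    obtain ⟨he1, he2⟩ := Prod.ext_iff.mp heq'
    simp only at he1 he2
    have : a₁.1 = a₂.1 := by
      rw [← hm_addAt_subAt a₁.1 i hφ₁.2, ← hm_addAt_subAt a₂.1 i hφ₂.2, he1, he2]
    exact Prod.ext this he2
  · intro b hb hgb
    have hub : u (addAt b.1 i b.2) ≠ 0 := fun h => hgb (by simp [h])
    have hvb : v b.1 ≠ 0 := fun h => hgb (by rw [h, mul_zero])
    have hbmem := Finset.mem_product.mp hb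
    have hk1 : 1 ≤ b.2 := (Finset.mem_Icc.mp hbmem.2).1
    refine ⟨(addAt b.1 i b.2, b.2), Finset.mem_product.mpr ⟨hu _ hub, hbmem.2⟩, ?_, ?_⟩
    · show muH s ρ (addAt b.1 i b.2) * phiRate s b.2 ((addAt b.1 i b.2) i)
          * u (addAt b.1 i b.2) * v (subAt (addAt b.1 i b.2) i b.2) ≠ 0
      rw [hm_subAt_addAt, hm_addAt_self]
      exact mul_ne_zero (mul_ne_zero (mul_ne_zero (muH_pos hs hρ _).ne'
        (phiRate_pos hs hk1 (Nat.le_add_left _ _)).ne') hub) hvb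
    · show (subAt (addAt b.1 i b.2) i b.2, b.2) = b
      rw [hm_subAt_addAt]
  · intro a h₁ h₂
    have hφ := phiRate_ne_zero_imp (fun h : phiRate s a.2 (a.1 i) = 0 => h₂ (by simp [h]))
    show _ = muH s ρ (subAt a.1 i a.2) * ((1 / (a.2:ℝ)) * (ρ / (1 + ρ)) ^ a.2)
        * u (addAt (subAt a.1 i a.2) i a.2) * v (subAt a.1 i a.2)
    rw [hm_addAt_subAt a.1 i hφ.2]
    linear_combination (u a.1 * v (subAt a.1 i a.2)) * muH_balance_sub hs hρ a.1 i hφ.1 hφ.2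

lemma cross_bulk {s ρ : ℝ} (hs : 0 < s) (hρ : 0 < ρ) (S : Finset (Fin M → ℕ)) (K : ℕ)
    {i j : Fin M} (hij : i ≠ j) (u v : (Fin M → ℕ) → ℝ)
    (hu : ∀ ζ, u ζ ≠ 0 → ζ ∈ S) (hv : ∀ ζ, v ζ ≠ 0 → ζ ∈ S) :
    ∑ η ∈ S, ∑ k ∈ Finset.Icc 1 K,
        muH s ρ η * phiRate s k (η i) * u η * v (moveK η i j k)
      = ∑ η ∈ S, ∑ k ∈ Finset.Icc 1 K,
          muH s ρ η * phiRate s k (η j) * u (moveK η j i k) * v η := by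
  rw [← Finset.sum_product' S (Finset.Icc 1 K)
      (fun η k => muH s ρ η * phiRate s k (η i) * u η * v (moveK η i j k)),
    ← Finset.sum_product' S (Finset.Icc 1 K)
      (fun η k => muH s ρ η * phiRate s k (η j) * u (moveK η j i k) * v η)]
  refine Finset.sum_bij_ne_zero (fun a _ _ => (moveK a.1 i j a.2, a.2)) ?_ ?_ ?_ ?_
  · intro a h₁ h₂
    have hva : v (moveK a.1 i j a.2) ≠ 0 := fun h => h₂ (by rw [h, mul_zero])
    exact Finset.mem_product.mpr ⟨hv _ hva, (Finset.mem_product.mp h₁).2⟩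
  · intro a₁ h₁₁ h₁₂ a₂ h₂₁ h₂₂ heq
    have hφ₁ := phiRate_ne_zero_imp (fun h : phiRate s a₁.2 (a₁.1 i) = 0 => h₁₂ (by simp [h]))
    have hφ₂ := phiRate_ne_zero_imp (fun h : phiRate s a₂.2 (a₂.1 i) = 0 => h₂₂ (by simp [h]))
    have heq' : (moveK a₁.1 i j a₁.2, a₁.2) = (moveK a₂.1 i j a₂.2, a₂.2) := heq
    obtain ⟨he1, he2⟩ := Prod.ext_iff.mp heq'
    simp only at he1 he2
    have : a₁.1 = a₂.1 := by
      rw [← hm_moveK_moveK a₁.1 hij hφ₁.2, ← hm_moveK_moveK a₂.1 hij hφ₂.2, he1, he2]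
    exact Prod.ext this he2
  · intro b hb hgb
    have hφb := phiRate_ne_zero_imp
      (fun h : phiRate s b.2 (b.1 j) = 0 => hgb (by simp [h]))
    have hub : u (moveK b.1 j i b.2) ≠ 0 := fun h => hgb (by simp [h])
    have hvb : v b.1 ≠ 0 := fun h => hgb (by rw [h, mul_zero])
    have hbmem := Finset.mem_product.mp hb
    refine ⟨(moveK b.1 j i b.2, b.2), Finset.mem_product.mpr ⟨hu _ hub, hbmem.2⟩, ?_, ?_⟩
    · show muH s ρ (moveK b.1 j i b.2) * phiRate s b.2 ((moveK b.1 j i b.2) i)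
          * u (moveK b.1 j i b.2) * v (moveK (moveK b.1 j i b.2) i j b.2) ≠ 0
      rw [hm_moveK_apply_j b.1 hij.symm, hm_moveK_moveK b.1 hij.symm hφb.2]
      exact mul_ne_zero (mul_ne_zero (mul_ne_zero (muH_pos hs hρ _).ne'
        (phiRate_pos hs hφb.1 (Nat.le_add_left _ _)).ne') hub) hvb
    · show (moveK (moveK b.1 j i b.2) i j b.2, b.2) = b
      rw [hm_moveK_moveK b.1 hij.symm hφb.2]
  · intro a h₁ h₂
    have hφ := phiRate_ne_zero_imp (fun h : phiRate s a.2 (a.1 i) = 0 => h₂ (by simp [h]))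
    show _ = muH s ρ (moveK a.1 i j a.2) * phiRate s a.2 ((moveK a.1 i j a.2) j)
        * u (moveK (moveK a.1 i j a.2) j i a.2) * v (moveK a.1 i j a.2)
    rw [hm_moveK_apply_j a.1 hij, hm_moveK_moveK a.1 hij hφ.2]
    linear_combination (u a.1 * v (moveK a.1 i j a.2))
      * muH_balance_move hs hρ a.1 hij hφ.1 hφ.2

end Cross

section Expand

variable {M : ℕ}

lemma sum_phi_ext {s : ℝ} {K n : ℕ} (hn : n ≤ K) (X : ℕ → ℝ) :
    ∑ k ∈ Finset.Icc 1 n, phiRate s k n * X k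
      = ∑ k ∈ Finset.Icc 1 K, phiRate s k n * X k :=
  Finset.sum_subset (Finset.Icc_subset_Icc_right hn) (fun k _ hk' => by
    rw [phiRate_zero (fun hc => hk' (Finset.mem_Icc.mpr hc)), zero_mul])

lemma sum_phi_split {s : ℝ} (h : (Fin M → ℕ) → ℝ) (η : Fin M → ℕ) {m K : ℕ} (hm : m ≤ K)
    (Y : ℕ → ℝ) :
    ∑ k ∈ Finset.Icc 1 m, phiRate s k m * (Y k - h η)
      = (∑ k ∈ Finset.Icc 1 K, phiRate s k m * Y k)
        - (∑ k ∈ Finset.Icc 1 K, phiRate s k m) * h η := by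
  simp only [mul_sub]
  rw [Finset.sum_sub_distrib, sum_phi_ext hm Y, sum_phi_ext hm (fun _ => h η),
    ← Finset.sum_mul]

lemma expand_bulk {s : ℝ} {K : ℕ} (i j : Fin M) (h : (Fin M → ℕ) → ℝ) (η : Fin M → ℕ)
    (hi : η i ≤ K) (hj : η j ≤ K) :
    genBulk s i j h η
      = (∑ k ∈ Finset.Icc 1 K, phiRate s k (η i) * h (moveK η i j k))
        + (∑ k ∈ Finset.Icc 1 K, phiRate s k (η j) * h (moveK η j i k))
        - ((∑ k ∈ Finset.Icc 1 K, phiRate s k (η i))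
            + ∑ k ∈ Finset.Icc 1 K, phiRate s k (η j)) * h η := by
  unfold genBulk
  rw [sum_phi_split h η hi, sum_phi_split h η hj]
  ring

lemma expand_bdry {s ρ : ℝ} (hρ : 0 < ρ) (S : Finset (Fin M → ℕ)) {K : ℕ}
    (hK : ∀ ζ ∈ S, ∀ l, ζ l ≤ K) (i : Fin M) (h : (Fin M → ℕ) → ℝ)
    (hh : ∀ ζ, h ζ ≠ 0 → ζ ∈ S) (η : Fin M → ℕ) (hi : η i ≤ K) :
    genBdry s ρ i h η
      = (∑ k ∈ Finset.Icc 1 K, phiRate s k (η i) * h (subAt η i k))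
        + (∑ k ∈ Finset.Icc 1 K, (1 / (k:ℝ)) * (ρ / (1 + ρ)) ^ k * h (addAt η i k))
        - ((∑ k ∈ Finset.Icc 1 K, phiRate s k (η i))
            + (∑' k : ℕ, if k = 0 then 0 else (1 / (k:ℝ)) * (ρ / (1 + ρ)) ^ k)) * h η := by
  have h1ρ : (0:ℝ) < 1 + ρ := by linarith
  have hp0 : (0:ℝ) ≤ ρ / (1 + ρ) := by positivity
  have hp1 : ρ / (1 + ρ) < 1 := by rw [div_lt_one h1ρ]; linarith
  have hc0 : Summable (fun k : ℕ => if k = 0 then 0 else (1 / (k:ℝ)) * (ρ / (1 + ρ)) ^ k) := by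
    apply Summable.of_nonneg_of_le _ _ (summable_geometric_of_lt_one hp0 hp1)
    · intro k
      split_ifs with hk
      · exact le_refl 0
      · positivity
    · intro k
      split_ifs with hk
      · positivity
      · have hk1 : (1:ℝ) ≤ (k:ℝ) := by
          exact_mod_cast Nat.one_le_iff_ne_zero.mpr hk
        calc (1 / (k:ℝ)) * (ρ / (1 + ρ)) ^ k ≤ 1 * (ρ / (1 + ρ)) ^ k := by
              apply mul_le_mul_of_nonneg_right _ (by positivity)
              rw [div_le_one (by linarith)]; exact hk1
          _ = (ρ / (1 + ρ)) ^ k := one_mul _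
  have hA : Summable (fun k : ℕ =>
      if k = 0 then 0 else (1 / (k:ℝ)) * (ρ / (1 + ρ)) ^ k * h (addAt η i k)) := by
    apply summable_of_ne_finset_zero (s := Finset.Icc 1 K)
    intro k hk
    rcases eq_or_ne k 0 with rfl | hk0
    · simp
    · have hk1 : 1 ≤ k := Nat.one_le_iff_ne_zero.mpr hk0
      have hKk : K < k := by
        by_contra hle
        exact hk (Finset.mem_Icc.mpr ⟨hk1, not_lt.mp hle⟩)
      have hz : h (addAt η i k) = 0 := by
        by_contra hne
        have := hK _ (hh _ hne) i
        rw [hm_addAt_self] at this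
        omega
      simp [if_neg hk0, hz]
  have hB : Summable (fun k : ℕ =>
      (if k = 0 then 0 else (1 / (k:ℝ)) * (ρ / (1 + ρ)) ^ k) * h η) := hc0.mul_right _
  unfold genBdry
  rw [sum_phi_split h η hi]
  have e2 : ∀ k : ℕ, (if k = 0 then 0
        else (1 / (k : ℝ)) * (ρ / (1 + ρ)) ^ k * (h (addAt η i k) - h η))
      = (if k = 0 then 0 else (1 / (k:ℝ)) * (ρ / (1 + ρ)) ^ k * h (addAt η i k))
        - (if k = 0 then 0 else (1 / (k:ℝ)) * (ρ / (1 + ρ)) ^ k) * h η := by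
    intro k
    split_ifs with hk
    · ring
    · ring
  rw [tsum_congr e2, Summable.tsum_sub hA hB, tsum_mul_right,
    tsum_eq_sum (s := Finset.Icc 1 K) (f := fun k : ℕ =>
      if k = 0 then 0 else (1 / (k:ℝ)) * (ρ / (1 + ρ)) ^ k * h (addAt η i k)) ?van]
  case van =>
    intro k hk
    rcases eq_or_ne k 0 with rfl | hk0
    · simp
    · have hk1 : 1 ≤ k := Nat.one_le_iff_ne_zero.mpr hk0
      have hKk : K < k := by
        by_contra hle
        exact hk (Finset.mem_Icc.mpr ⟨hk1, not_lt.mp hle⟩)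
      have hz : h (addAt η i k) = 0 := by
        by_contra hne
        have := hK _ (hh _ hne) i
        rw [hm_addAt_self] at this
        omega
      simp [if_neg hk0, hz]
  have e3 : ∑ k ∈ Finset.Icc 1 K,
      (if k = 0 then 0 else (1 / (k:ℝ)) * (ρ / (1 + ρ)) ^ k * h (addAt η i k))
      = ∑ k ∈ Finset.Icc 1 K, (1 / (k:ℝ)) * (ρ / (1 + ρ)) ^ k * h (addAt η i k) := by
    refine Finset.sum_congr rfl fun k hk => ?_
    rw [if_neg (by have := (Finset.mem_Icc.mp hk).1; omega)]
  rw [e3]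
  ring

end Expand


/-- Reversibility of the homogeneous product of Negative Binomial laws for the open harmonic
process with equal reservoir densities `ρ_l = ρ_r = ρ`: for all finitely supported `f`, `g`,
`Σ_η μ(η) f(η)(ℒg)(η) = Σ_η μ(η)(ℒf)(η) g(η)`, all the series converging absolutely
(in `ℝ`, `Summable` is absolute convergence). The system size is `N+1 ≥ 1`. -/
theorem harmonic_reversible_equilibrium (s : ℝ) (hs : 0 < s) (N : ℕ) (ρ : ℝ) (hρ : 0 < ρ)
    (f g : (Fin (N + 1) → ℕ) → ℝ)
    (hf : (Function.support f).Finite) (hg : (Function.support g).Finite) :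
    Summable (fun η : Fin (N + 1) → ℕ =>
        (∏ i : Fin (N + 1), negBin s ρ (η i)) * f η * harmonicGenerator s ρ ρ g η) ∧
    Summable (fun η : Fin (N + 1) → ℕ =>
        (∏ i : Fin (N + 1), negBin s ρ (η i)) * harmonicGenerator s ρ ρ f η * g η) ∧
    ∑' η : Fin (N + 1) → ℕ,
        (∏ i : Fin (N + 1), negBin s ρ (η i)) * f η * harmonicGenerator s ρ ρ g η
      = ∑' η : Fin (N + 1) → ℕ,
          (∏ i : Fin (N + 1), negBin s ρ (η i)) * harmonicGenerator s ρ ρ f η * g η := by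
  classical
  set S : Finset (Fin (N + 1) → ℕ) := hf.toFinset ∪ hg.toFinset with hS
  have hfS : ∀ ζ, f ζ ≠ 0 → ζ ∈ S := fun ζ h => Finset.mem_union_left _ (hf.mem_toFinset.mpr h)
  have hgS : ∀ ζ, g ζ ≠ 0 → ζ ∈ S := fun ζ h => Finset.mem_union_right _ (hg.mem_toFinset.mpr h)
  set K : ℕ := S.sup (fun η => Finset.univ.sup η) with hKdef
  have hK : ∀ ζ ∈ S, ∀ l, ζ l ≤ K := fun ζ hζ l =>
    le_trans (Finset.le_sup (Finset.mem_univ l)) (Finset.le_sup hζ)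
  have hfz : ∀ η ∉ S, f η = 0 := fun η hη => by
    by_contra h; exact hη (hfS η h)
  have hgz : ∀ η ∉ S, g η = 0 := fun η hη => by
    by_contra h; exact hη (hgS η h)
  have hmu : ∀ η : Fin (N + 1) → ℕ, (∏ i : Fin (N + 1), negBin s ρ (η i)) = muH s ρ η :=
    fun _ => rfl
  refine ⟨summable_of_ne_finset_zero (s := S) fun η hη => by simp [hfz η hη],
    summable_of_ne_finset_zero (s := S) fun η hη => by simp [hgz η hη], ?_⟩
  rw [tsum_eq_sum (s := S) (fun η hη => by simp [hfz η hη]),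
    tsum_eq_sum (s := S) (fun η hη => by simp [hgz η hη])]
  simp only [hmu]
  have key_bdry : ∀ i : Fin (N + 1),
      ∑ η ∈ S, muH s ρ η * f η * genBdry s ρ i g η
        = ∑ η ∈ S, muH s ρ η * g η * genBdry s ρ i f η := by
    intro i
    have expand : ∀ (u v : (Fin (N + 1) → ℕ) → ℝ), (∀ ζ, v ζ ≠ 0 → ζ ∈ S) →
        ∑ η ∈ S, muH s ρ η * u η * genBdry s ρ i v η
          = (∑ η ∈ S, ∑ k ∈ Finset.Icc 1 K,
              muH s ρ η * phiRate s k (η i) * u η * v (subAt η i k))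
            + (∑ η ∈ S, ∑ k ∈ Finset.Icc 1 K,
                muH s ρ η * ((1 / (k:ℝ)) * (ρ / (1 + ρ)) ^ k) * u η * v (addAt η i k))
            - ∑ η ∈ S, (muH s ρ η * u η * v η)
                * ((∑ k ∈ Finset.Icc 1 K, phiRate s k (η i))
                  + (∑' k : ℕ, if k = 0 then 0 else (1 / (k:ℝ)) * (ρ / (1 + ρ)) ^ k)) := by
      intro u v hv
      rw [← Finset.sum_add_distrib, ← Finset.sum_sub_distrib]
      refine Finset.sum_congr rfl fun η hη => ?_
      rw [expand_bdry hρ S hK i v hv η (hK η hη i)]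
      have h1 : muH s ρ η * u η
            * (∑ k ∈ Finset.Icc 1 K, phiRate s k (η i) * v (subAt η i k))
          = ∑ k ∈ Finset.Icc 1 K, muH s ρ η * phiRate s k (η i) * u η * v (subAt η i k) := by
        rw [Finset.mul_sum]; exact Finset.sum_congr rfl fun k _ => by ring
      have h2 : muH s ρ η * u η
            * (∑ k ∈ Finset.Icc 1 K, (1 / (k:ℝ)) * (ρ / (1 + ρ)) ^ k * v (addAt η i k))
          = ∑ k ∈ Finset.Icc 1 K,
              muH s ρ η * ((1 / (k:ℝ)) * (ρ / (1 + ρ)) ^ k) * u η * v (addAt η i k) := by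
        rw [Finset.mul_sum]; exact Finset.sum_congr rfl fun k _ => by ring
      linear_combination h1 + h2
    rw [expand f g hgS, expand g f hfS]
    have hX : (∑ η ∈ S, ∑ k ∈ Finset.Icc 1 K,
          muH s ρ η * phiRate s k (η i) * f η * g (subAt η i k))
        = ∑ η ∈ S, ∑ k ∈ Finset.Icc 1 K,
            muH s ρ η * ((1 / (k:ℝ)) * (ρ / (1 + ρ)) ^ k) * g η * f (addAt η i k) :=
      (cross_bdry hs hρ S K i f g hfS hgS).trans
        (Finset.sum_congr rfl fun η _ => Finset.sum_congr rfl fun k _ => by ring)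
    have hY : (∑ η ∈ S, ∑ k ∈ Finset.Icc 1 K,
          muH s ρ η * phiRate s k (η i) * g η * f (subAt η i k))
        = ∑ η ∈ S, ∑ k ∈ Finset.Icc 1 K,
            muH s ρ η * ((1 / (k:ℝ)) * (ρ / (1 + ρ)) ^ k) * f η * g (addAt η i k) :=
      (cross_bdry hs hρ S K i g f hgS hfS).trans
        (Finset.sum_congr rfl fun η _ => Finset.sum_congr rfl fun k _ => by ring)
    have hD : (∑ η ∈ S, (muH s ρ η * f η * g η)
            * ((∑ k ∈ Finset.Icc 1 K, phiRate s k (η i))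
              + (∑' k : ℕ, if k = 0 then 0 else (1 / (k:ℝ)) * (ρ / (1 + ρ)) ^ k)))
        = ∑ η ∈ S, (muH s ρ η * g η * f η)
            * ((∑ k ∈ Finset.Icc 1 K, phiRate s k (η i))
              + (∑' k : ℕ, if k = 0 then 0 else (1 / (k:ℝ)) * (ρ / (1 + ρ)) ^ k)) :=
      Finset.sum_congr rfl fun η _ => by ring
    linear_combination hX - hY - hD
  have key_bulk : ∀ {i j : Fin (N + 1)}, i ≠ j →
      ∑ η ∈ S, muH s ρ η * f η * genBulk s i j g η
        = ∑ η ∈ S, muH s ρ η * g η * genBulk s i j f η := by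
    intro i j hij
    have expand : ∀ (u v : (Fin (N + 1) → ℕ) → ℝ),
        ∑ η ∈ S, muH s ρ η * u η * genBulk s i j v η
          = (∑ η ∈ S, ∑ k ∈ Finset.Icc 1 K,
              muH s ρ η * phiRate s k (η i) * u η * v (moveK η i j k))
            + (∑ η ∈ S, ∑ k ∈ Finset.Icc 1 K,
                muH s ρ η * phiRate s k (η j) * u η * v (moveK η j i k))
            - ∑ η ∈ S, (muH s ρ η * u η * v η)
                * ((∑ k ∈ Finset.Icc 1 K, phiRate s k (η i))
                  + ∑ k ∈ Finset.Icc 1 K, phiRate s k (η j)) := by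
      intro u v
      rw [← Finset.sum_add_distrib, ← Finset.sum_sub_distrib]
      refine Finset.sum_congr rfl fun η hη => ?_
      rw [expand_bulk i j v η (hK η hη i) (hK η hη j)]
      have h1 : muH s ρ η * u η
            * (∑ k ∈ Finset.Icc 1 K, phiRate s k (η i) * v (moveK η i j k))
          = ∑ k ∈ Finset.Icc 1 K, muH s ρ η * phiRate s k (η i) * u η * v (moveK η i j k) := by
        rw [Finset.mul_sum]; exact Finset.sum_congr rfl fun k _ => by ring
      have h2 : muH s ρ η * u η
            * (∑ k ∈ Finset.Icc 1 K, phiRate s k (η j) * v (moveK η j i k))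
          = ∑ k ∈ Finset.Icc 1 K, muH s ρ η * phiRate s k (η j) * u η * v (moveK η j i k) := by
        rw [Finset.mul_sum]; exact Finset.sum_congr rfl fun k _ => by ring
      linear_combination h1 + h2
    rw [expand f g, expand g f]
    have hX : (∑ η ∈ S, ∑ k ∈ Finset.Icc 1 K,
          muH s ρ η * phiRate s k (η i) * f η * g (moveK η i j k))
        = ∑ η ∈ S, ∑ k ∈ Finset.Icc 1 K,
              muH s ρ η * phiRate s k (η j) * g η * f (moveK η j i k) :=
      (cross_bulk hs hρ S K hij f g hfS hgS).trans
        (Finset.sum_congr rfl fun η _ => Finset.sum_congr rfl fun k _ => by ring)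
    have hY : (∑ η ∈ S, ∑ k ∈ Finset.Icc 1 K,
          muH s ρ η * phiRate s k (η j) * f η * g (moveK η j i k))
        = ∑ η ∈ S, ∑ k ∈ Finset.Icc 1 K,
              muH s ρ η * phiRate s k (η i) * g η * f (moveK η i j k) :=
      (cross_bulk hs hρ S K hij.symm f g hfS hgS).trans
        (Finset.sum_congr rfl fun η _ => Finset.sum_congr rfl fun k _ => by ring)
    have hD : (∑ η ∈ S, (muH s ρ η * f η * g η)
            * ((∑ k ∈ Finset.Icc 1 K, phiRate s k (η i))
              + ∑ k ∈ Finset.Icc 1 K, phiRate s k (η j)))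
        = ∑ η ∈ S, (muH s ρ η * g η * f η)
            * ((∑ k ∈ Finset.Icc 1 K, phiRate s k (η i))
              + ∑ k ∈ Finset.Icc 1 K, phiRate s k (η j)) :=
      Finset.sum_congr rfl fun η _ => by ring
    linear_combination hX + hY - hD
  have dec : ∀ u v : (Fin (N + 1) → ℕ) → ℝ,
      ∑ η ∈ S, muH s ρ η * u η * harmonicGenerator s ρ ρ v η
        = (∑ η ∈ S, muH s ρ η * u η * genBdry s ρ 0 v η)
          + (∑ i : Fin N, ∑ η ∈ S, muH s ρ η * u η * genBulk s i.castSucc i.succ v η)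
          + ∑ η ∈ S, muH s ρ η * u η * genBdry s ρ (Fin.last N) v η := by
    intro u v
    unfold harmonicGenerator
    simp only [mul_add]
    rw [Finset.sum_add_distrib, Finset.sum_add_distrib]
    congr 1
    congr 1
    calc ∑ η ∈ S, muH s ρ η * u η * ∑ i : Fin N, genBulk s i.castSucc i.succ v η
        = ∑ η ∈ S, ∑ i : Fin N, muH s ρ η * u η * genBulk s i.castSucc i.succ v η :=
          Finset.sum_congr rfl fun η _ => Finset.mul_sum _ _ _
      _ = ∑ i : Fin N, ∑ η ∈ S, muH s ρ η * u η * genBulk s i.castSucc i.succ v η :=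
          Finset.sum_comm
  rw [show (∑ η ∈ S, muH s ρ η * harmonicGenerator s ρ ρ f η * g η)
      = ∑ η ∈ S, muH s ρ η * g η * harmonicGenerator s ρ ρ f η from
    Finset.sum_congr rfl fun η _ => by ring]
  rw [dec f g, dec g f, key_bdry 0, key_bdry (Fin.last N)]
  congr 1
  congr 1
  exact Finset.sum_congr rfl fun i _ => key_bulk (Fin.castSucc_lt_succ (i := i)).ne
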